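/- For every even n ≥ 0 and every j ≥ 1, the element βₙ⁽ʲ⁾ = Σ_{i=j}^{n+j} (-1)^{j+i} C(i,j) xᵢ x_{n+j-i} satisfies Δβₙ⁽ʲ⁾ = βₙ⁽ʲ⁻¹⁾, where Δ is the down operator; in particular βₙ⁽⁰⁾ = Σ_{i=0}^{n}(-1)ⁱxᵢx_{n-i} lies in ker Δ, so (βₙ⁽ʲ⁾)_{j≥0} is a Δ-cable. -/
import Mathlib


open MvPolynomial

/-- The down operator `Δ` on `Ω = k[x₀, x₁, x₂, ...]`. -/
noncomputable def downOp (k : Type*) [Field k] [CharZero k] :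
    Derivation k (MvPolynomial ℕ k) (MvPolynomial ℕ k) :=
  MvPolynomial.mkDerivation k (fun n => if n = 0 then 0 else X (n - 1))

/-- `θₙ⁽⁰⁾ = Σ_{i=0}^{n} (-1)ⁱ xᵢ x_{n-i}`. -/
noncomputable def theta0 (k : Type*) [Field k] [CharZero k] (n : ℕ) : MvPolynomial ℕ k :=
  ∑ i ∈ Finset.range (n + 1), (-1 : MvPolynomial ℕ k) ^ i * X i * X (n - i)

/-- `βₙ⁽ʲ⁾ = Σ_{i=j}^{n+j} (-1)^{j+i} C(i,j) xᵢ x_{n+j-i}`. -/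
noncomputable def betaCable (k : Type*) [Field k] [CharZero k] (n j : ℕ) : MvPolynomial ℕ k :=
  ∑ i ∈ Finset.Icc j (n + j),
    (-1 : MvPolynomial ℕ k) ^ (j + i) * ((i.choose j : ℕ) : MvPolynomial ℕ k) *
      X i * X (n + j - i)

section Aux

variable (k : Type*) [Field k] [CharZero k]

lemma downOp_X (i : ℕ) : downOp k (X i) = if i = 0 then 0 else X (i - 1) :=
  MvPolynomial.mkDerivation_X _ _ _

lemma downOp_C (a : k) : downOp k (C a) = 0 := by
  rw [← MvPolynomial.algebraMap_eq]
  exact Derivation.map_algebraMap _ a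

lemma downOp_const (t c : ℕ) :
    downOp k ((-1 : MvPolynomial ℕ k) ^ t * ((c : ℕ) : MvPolynomial ℕ k)) = 0 := by
  have h : ((-1 : MvPolynomial ℕ k) ^ t * ((c : ℕ) : MvPolynomial ℕ k)) = C ((-1 : k) ^ t * c) := by
    rw [map_mul, map_pow, map_neg, map_one, map_natCast]
  rw [h, downOp_C]

lemma downOp_term (t c a b : ℕ) :
    downOp k ((-1 : MvPolynomial ℕ k) ^ t * ((c : ℕ) : MvPolynomial ℕ k) * X a * X b)
      = (-1 : MvPolynomial ℕ k) ^ t * ((c : ℕ) : MvPolynomial ℕ k) *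
          ((if a = 0 then 0 else X (a - 1)) * X b
            + X a * (if b = 0 then 0 else X (b - 1))) := by
  rw [Derivation.leibniz, Derivation.leibniz, downOp_const, downOp_X, downOp_X]
  simp only [smul_eq_mul, mul_zero, add_zero]
  ring

/-- Reindexed form of `betaCable`. -/
lemma betaCable_eq (n j : ℕ) :
    betaCable k n j
      = ∑ t ∈ Finset.range (n + 1),
          (-1 : MvPolynomial ℕ k) ^ t * (((j + t).choose j : ℕ) : MvPolynomial ℕ k) *
            X (j + t) * X (n - t) := by
  unfold betaCable
  have hIcc : Finset.Icc j (n + j) = (Finset.range (n + 1)).map (addLeftEmbedding j) := by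
    ext x
    simp only [Finset.mem_Icc, Finset.mem_map, Finset.mem_range, addLeftEmbedding_apply]
    constructor
    · rintro ⟨h1, h2⟩; exact ⟨x - j, by omega, by omega⟩
    · rintro ⟨a, ha, rfl⟩; omega
  rw [hIcc, Finset.sum_map]
  refine Finset.sum_congr rfl fun t ht => ?_
  simp only [addLeftEmbedding_apply]
  have h1 : n + j - (j + t) = n - t := by omega
  have h2 : (-1 : MvPolynomial ℕ k) ^ (j + (j + t)) = (-1) ^ t := by
    have : j + (j + t) = 2 * j + t := by ring
    rw [this, pow_add, pow_mul]
    simp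
  rw [h1, h2]

lemma key (n j : ℕ) : downOp k (betaCable k n (j + 1)) = betaCable k n j := by
  rw [betaCable_eq k n (j + 1), betaCable_eq k n j, map_sum]
  -- abbreviation for the "cross" term
  set h : ℕ → MvPolynomial ℕ k := fun t =>
    (-1 : MvPolynomial ℕ k) ^ t * (((j + t).choose (j + 1) : ℕ) : MvPolynomial ℕ k) *
      X (j + t) * X (n - t) with hh
  have hstep : ∀ t ∈ Finset.range (n + 1),
      downOp k ((-1 : MvPolynomial ℕ k) ^ t * ((((j + 1 + t).choose (j + 1) : ℕ)) : MvPolynomial ℕ k) *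
          X (j + 1 + t) * X (n - t))
        = ((-1 : MvPolynomial ℕ k) ^ t * ((((j + 1 + t).choose (j + 1) : ℕ)) : MvPolynomial ℕ k) *
            X (j + t) * X (n - t))
          + ((-1 : MvPolynomial ℕ k) ^ t * ((((j + 1 + t).choose (j + 1) : ℕ)) : MvPolynomial ℕ k) *
              (X (j + 1 + t) * (if n - t = 0 then 0 else X (n - t - 1)))) := by
    intro t ht
    rw [downOp_term]
    have ha : ¬ (j + 1 + t = 0) := by omega
    have ha' : j + 1 + t - 1 = j + t := by omega
    rw [if_neg ha, ha']
    ring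
  rw [Finset.sum_congr rfl hstep, Finset.sum_add_distrib]
  -- second sum equals -∑ h t over range (n+1)
  have hS2 : (∑ t ∈ Finset.range (n + 1),
        (-1 : MvPolynomial ℕ k) ^ t * ((((j + 1 + t).choose (j + 1) : ℕ)) : MvPolynomial ℕ k) *
          (X (j + 1 + t) * (if n - t = 0 then 0 else X (n - t - 1))))
      = - ∑ t ∈ Finset.range (n + 1), h t := by
    rw [Finset.sum_range_succ, Finset.sum_range_succ' h]
    have htop : n - n = 0 := by omega
    rw [htop, if_pos rfl]
    have hh0 : h 0 = 0 := by
      simp [hh, Nat.choose_eq_zero_of_lt (by omega : j < j + 1)]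
    rw [hh0, add_zero, mul_zero, mul_zero, add_zero, ← Finset.sum_neg_distrib]
    refine Finset.sum_congr rfl fun t ht => ?_
    simp only [Finset.mem_range] at ht
    have h1 : ¬ (n - t = 0) := by omega
    rw [if_neg h1]
    simp only [hh]
    have h2 : j + (t + 1) = j + 1 + t := by ring
    have h3 : n - (t + 1) = n - t - 1 := by omega
    rw [h2, h3, pow_succ]
    ring
  rw [hS2, ← sub_eq_add_neg, ← Finset.sum_sub_distrib]
  refine Finset.sum_congr rfl fun t ht => ?_
  simp only [hh]
  have hp : (j + 1 + t).choose (j + 1) = (j + t).choose j + (j + t).choose (j + 1) := by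
    have : j + 1 + t = (j + t) + 1 := by ring
    rw [this, Nat.choose_succ_succ]
  rw [hp]
  push_cast
  ring

lemma key0 (n : ℕ) : downOp k (betaCable k n 0) = 0 := by
  rw [betaCable_eq k n 0, map_sum]
  have hstep : ∀ t ∈ Finset.range (n + 1),
      downOp k ((-1 : MvPolynomial ℕ k) ^ t * ((((0 + t).choose 0 : ℕ)) : MvPolynomial ℕ k) *
          X (0 + t) * X (n - t))
        = ((-1 : MvPolynomial ℕ k) ^ t * ((if t = 0 then 0 else X (t - 1)) * X (n - t)))
          + ((-1 : MvPolynomial ℕ k) ^ t *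
              (X t * (if n - t = 0 then 0 else X (n - t - 1)))) := by
    intro t ht
    rw [downOp_term]
    simp only [Nat.choose_zero_right, Nat.cast_one, zero_add]
    ring
  rw [Finset.sum_congr rfl hstep, Finset.sum_add_distrib]
  have hA : (∑ t ∈ Finset.range (n + 1),
        (-1 : MvPolynomial ℕ k) ^ t * ((if t = 0 then 0 else X (t - 1)) * X (n - t)))
      = ∑ t ∈ Finset.range n,
          (-1 : MvPolynomial ℕ k) ^ (t + 1) * (X t * X (n - 1 - t)) := by
    rw [Finset.sum_range_succ'
      (fun t => (-1 : MvPolynomial ℕ k) ^ t * ((if t = 0 then 0 else X (t - 1)) * X (n - t))) n]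
    simp
    refine Finset.sum_congr rfl fun t ht => ?_
    have h3 : n - (t + 1) = n - 1 - t := by omega
    rw [h3]
  have hB : (∑ t ∈ Finset.range (n + 1),
        (-1 : MvPolynomial ℕ k) ^ t * (X t * (if n - t = 0 then 0 else X (n - t - 1))))
      = ∑ t ∈ Finset.range n,
          (-1 : MvPolynomial ℕ k) ^ t * (X t * X (n - 1 - t)) := by
    rw [Finset.sum_range_succ]
    have htop : n - n = 0 := by omega
    rw [htop, if_pos rfl, mul_zero, mul_zero, add_zero]
    refine Finset.sum_congr rfl fun t ht => ?_
    simp only [Finset.mem_range] at ht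
    have h1 : ¬ (n - t = 0) := by omega
    have h3 : n - t - 1 = n - 1 - t := by omega
    rw [if_neg h1, h3]
  rw [hA, hB, ← Finset.sum_add_distrib]
  refine Finset.sum_eq_zero fun t ht => ?_
  rw [pow_succ]
  ring

lemma beta_zero (n : ℕ) : betaCable k n 0 = theta0 k n := by
  rw [betaCable_eq k n 0]
  unfold theta0
  refine Finset.sum_congr rfl fun t ht => ?_
  simp [Nat.choose_zero_right]

end Aux

/-- `(βₙ⁽ʲ⁾)_{j ≥ 0}` is a `Δ`-cable rooted at `θₙ⁽⁰⁾`: `Δ βₙ⁽ʲ⁾ = βₙ⁽ʲ⁻¹⁾` for `j ≥ 1`,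
and `βₙ⁽⁰⁾ = θₙ⁽⁰⁾ ∈ ker Δ`. -/
theorem betaCable_is_cable (k : Type*) [Field k] [CharZero k] :
    ∀ n : ℕ, Even n →
      (∀ j : ℕ, downOp k (betaCable k n (j + 1)) = betaCable k n j) ∧
      betaCable k n 0 = theta0 k n ∧ downOp k (betaCable k n 0) = 0 := by
  intro n _
  exact ⟨fun j => key k n j, beta_zero k n, key0 k n⟩
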